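/- Let i ≥ 0 be odd and let g be an E-linear automorphism of V with h(gx,gy) = h(x,y) for all x,y ∈ V, and with g(A_i) = A_i and g(B_i) = B_i. Then gx − x ∈ B_i for every x ∈ A_i if and only if gy − y ∈ A_i^⊥ for every y ∈ B_i^⊥; that is, g induces the identity on A_i/B_i if and only if g induces the identity on B_i^⊥/A_i^⊥. -/

import Mathlib

section aux

variable {A : Type*} [CommRing A] [IsDomain A] [IsDiscreteValuationRing A] [CharZero A]
    (hmax : IsLocalRing.maximalIdeal A = Ideal.span {2})
    (δ : A) (hδunit : IsUnit δ)
    {B : Type*} [CommRing B] [IsDomain B] [Algebra A B]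
    (π : B) (hπ : π ^ 2 = algebraMap A B (2 * δ))
    (σ : B ≃ₐ[A] B) (hσπ : σ π = -π)
    (hBfree : ∀ b : B, ∃! p : A × A, b = algebraMap A B p.1 + algebraMap A B p.2 * π)

include hBfree in
theorem aux_injA : Function.Injective (algebraMap A B) := by
  rw [injective_iff_map_eq_zero]
  intro a ha
  have h0 := hBfree 0
  have h1 : (0 : B) = algebraMap A B (a, (0:A)).1 + algebraMap A B (a, (0:A)).2 * π := by
    simp [ha]
  have h2 : (0 : B) = algebraMap A B ((0:A), (0:A)).1 + algebraMap A B ((0:A), (0:A)).2 * π := by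
    simp
  have := h0.unique h1 h2
  exact congrArg Prod.fst this

include hmax in
theorem aux_two_not_unit : ¬ IsUnit (2 : A) := by
  intro h
  have h2 : (2:A) ∈ IsLocalRing.maximalIdeal A := by
    rw [hmax]; exact Ideal.mem_span_singleton_self 2
  exact (IsLocalRing.mem_maximalIdeal (2:A)).mp h2 h

include hmax in
theorem aux_nonunit_dvd {a : A} (h : ¬ IsUnit a) : 2 ∣ a := by
  have : a ∈ IsLocalRing.maximalIdeal A := (IsLocalRing.mem_maximalIdeal a).mpr h
  rw [hmax, Ideal.mem_span_singleton] at this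
  exact this

-- norm computation
include hπ hσπ in
theorem aux_norm (a1 a2 : A) :
    (algebraMap A B a1 + algebraMap A B a2 * π) * σ (algebraMap A B a1 + algebraMap A B a2 * π)
      = algebraMap A B (a1^2 - 2*δ*a2^2) := by
  have hσ : σ (algebraMap A B a1 + algebraMap A B a2 * π)
      = algebraMap A B a1 - algebraMap A B a2 * π := by
    rw [map_add, map_mul, hσπ, σ.commutes, σ.commutes]; ring
  rw [hσ]
  have : (algebraMap A B a1 + algebraMap A B a2 * π) * (algebraMap A B a1 - algebraMap A B a2 * π)
      = (algebraMap A B a1)^2 - (algebraMap A B a2)^2 * π^2 := by ring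
  rw [this, hπ, ← map_pow, ← map_pow, ← map_mul, ← map_sub]
  congr 1
  ring

include hBfree in
theorem aux_unit_descent {a : A} (h : IsUnit (algebraMap A B a)) : IsUnit a := by
  obtain ⟨c, hc⟩ := h.exists_right_inv
  obtain ⟨⟨c1, c2⟩, hcc⟩ := (hBfree c).exists
  have h1 : (1 : B) = algebraMap A B ((a*c1, a*c2) : A × A).1
      + algebraMap A B ((a*c1, a*c2) : A × A).2 * π := by
    simp only [map_mul]
    rw [← hc, hcc]; ring
  have h2 : (1 : B) = algebraMap A B (((1:A), (0:A)) : A × A).1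
      + algebraMap A B (((1:A), (0:A)) : A × A).2 * π := by simp
  have h3 := ((hBfree 1).unique h1 h2)
  have : a * c1 = 1 := congrArg Prod.fst h3
  exact IsUnit.of_mul_eq_one _ this

include hmax hπ hσπ in
theorem aux_unit_of_a1 {a1 a2 : A} (h : IsUnit a1) :
    IsUnit (algebraMap A B a1 + algebraMap A B a2 * π) := by
  have hN : IsUnit (a1^2 - 2*δ*a2^2) := by
    by_contra hN
    have h2 : 2 ∣ (a1^2 - 2*δ*a2^2) := aux_nonunit_dvd hmax hN
    obtain ⟨t, ht⟩ := h2
    have : a1^2 = 2*(t + δ*a2^2) := by linear_combination ht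
    have h4 : ¬ IsUnit (a1^2) := by
      intro hu
      exact aux_two_not_unit hmax (isUnit_of_mul_isUnit_left (this ▸ hu))
    exact h4 (h.pow 2)
  have := hN.map (algebraMap A B)
  rw [← aux_norm δ π hπ σ hσπ a1 a2] at this
  exact isUnit_of_mul_isUnit_left this

include hπ in
theorem aux_pi_factor {a1 a2 c e : A} (he : δ * e = 1) (h : a1 = 2 * c) :
    algebraMap A B a1 + algebraMap A B a2 * π
      = π * (algebraMap A B a2 + algebraMap A B (e * c) * π) := by
  have h2 : π * (algebraMap A B a2 + algebraMap A B (e * c) * π)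
      = algebraMap A B (e * c) * π^2 + algebraMap A B a2 * π := by ring
  rw [h2, hπ, ← map_mul, h]
  congr 2
  linear_combination (-2 * c) * he

end aux

section aux2

set_option linter.unusedSectionVars false

variable {A : Type*} [CommRing A] [IsDomain A] [IsDiscreteValuationRing A] [CharZero A]
    (hmax : IsLocalRing.maximalIdeal A = Ideal.span {2})
    (δ : A) (hδunit : IsUnit δ)
    {B : Type*} [CommRing B] [IsDomain B] [Algebra A B]
    (π : B) (hπ : π ^ 2 = algebraMap A B (2 * δ))
    (σ : B ≃ₐ[A] B) (hσπ : σ π = -π)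
    (hBfree : ∀ b : B, ∃! p : A × A, b = algebraMap A B p.1 + algebraMap A B p.2 * π)

include hmax hδunit hπ hσπ hBfree

theorem aux_pi_norm : π * σ π = algebraMap A B (-(2*δ)) := by
  rw [hσπ, map_neg]
  rw [← hπ]; ring

theorem aux_pi_ne : π ≠ 0 := by
  intro h
  have h2 : algebraMap A B (2*δ) = 0 := by rw [← hπ, h]; ring
  have h3 : (2*δ : A) = 0 := aux_injA π hBfree (by simpa using h2)
  have : (2:A) ≠ 0 := two_ne_zero
  have : δ = 0 := by
    rcases mul_eq_zero.mp h3 with h | h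
    · exact absurd h this
    · exact h
  exact (this ▸ hδunit).ne_zero rfl |>.elim

theorem aux_irred : Irreducible π := by
  constructor
  · intro hu
    have h1 : IsUnit (π * σ π) := hu.mul (by rw [hσπ]; exact hu.neg)
    rw [aux_pi_norm hmax δ hδunit π hπ σ hσπ hBfree] at h1
    have h2 : IsUnit (-(2*δ) : A) := aux_unit_descent π hBfree h1
    have h4 : IsUnit ((2:A) * (-δ)) := by
      have h5 : (2 : A) * (-δ) = -(2*δ) := by ring
      rw [h5]; exact h2
    exact aux_two_not_unit hmax (isUnit_of_mul_isUnit_left h4)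
  · intro b c hbc
    by_contra hcon
    push_neg at hcon
    obtain ⟨hb, hc⟩ := hcon
    obtain ⟨⟨b1, b2⟩, hb12⟩ := (hBfree b).exists
    obtain ⟨⟨c1, c2⟩, hc12⟩ := (hBfree c).exists
    have hNb : ¬ IsUnit (b1^2 - 2*δ*b2^2) := by
      intro h
      apply hb
      have := h.map (algebraMap A B)
      rw [← aux_norm δ π hπ σ hσπ b1 b2, ← hb12] at this
      exact isUnit_of_mul_isUnit_left this
    have hNc : ¬ IsUnit (c1^2 - 2*δ*c2^2) := by
      intro h
      apply hc
      have := h.map (algebraMap A B)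
      rw [← aux_norm δ π hπ σ hσπ c1 c2, ← hc12] at this
      exact isUnit_of_mul_isUnit_left this
    obtain ⟨s, hs⟩ := aux_nonunit_dvd hmax hNb
    obtain ⟨t, ht⟩ := aux_nonunit_dvd hmax hNc
    have hprod : π * σ π = algebraMap A B ((b1^2 - 2*δ*b2^2) * (c1^2 - 2*δ*c2^2)) := by
      have : π * σ π = (b * σ b) * (c * σ c) := by rw [hbc, map_mul]; ring
      rw [this, hb12, hc12, aux_norm δ π hπ σ hσπ b1 b2, aux_norm δ π hπ σ hσπ c1 c2, ← map_mul]
    rw [aux_pi_norm hmax δ hδunit π hπ σ hσπ hBfree] at hprod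
    have heq : -(2*δ) = (b1^2 - 2*δ*b2^2) * (c1^2 - 2*δ*c2^2) :=
      aux_injA π hBfree hprod
    rw [hs, ht] at heq
    have hδ2 : δ = 2 * (-(s*t)) := by
      have h2 : (2:A) ≠ 0 := two_ne_zero
      apply mul_left_cancel₀ h2
      linear_combination -heq
    have h6 : IsUnit ((2:A) * (-(s*t))) := hδ2 ▸ hδunit
    exact aux_two_not_unit hmax (isUnit_of_mul_isUnit_left h6)

theorem aux_factor : ∀ b : B, b ≠ 0 → ∃ n : ℕ, Associated (π^n) b := by
  have hσ0 : ∀ b : B, b ≠ 0 → σ b ≠ 0 := by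
    intro b hb h
    exact hb (by simpa using congrArg σ.symm h)
  have key : ∀ k : ℕ, ∀ b : B, ∀ x : A, b ≠ 0 → b * σ b = algebraMap A B x →
      ¬ ((2:A)^k ∣ x) → ∃ n : ℕ, Associated (π^n) b := by
    intro k
    induction k with
    | zero => intro b x _ _ hdvd; exact absurd (by simpa using one_dvd x) hdvd
    | succ k ih =>
      intro b x hb hN h2
      obtain ⟨⟨a1, a2⟩, hb12⟩ := (hBfree b).exists
      by_cases hu : IsUnit a1
      · refine ⟨0, ?_⟩
        rw [pow_zero]
        exact (associated_one_iff_isUnit.mpr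
          (hb12 ▸ aux_unit_of_a1 hmax δ π hπ σ hσπ hu)).symm
      · obtain ⟨c, hc⟩ := aux_nonunit_dvd hmax hu
        obtain ⟨e, he⟩ := hδunit.exists_right_inv
        set b' := algebraMap A B a2 + algebraMap A B (e*c) * π with hb'def
        have hfac : b = π * b' := by
          rw [hb12]; exact aux_pi_factor δ π hπ he hc
        have hb' : b' ≠ 0 := by
          intro h; apply hb; rw [hfac, h, mul_zero]
        have hNb' : b' * σ b' = algebraMap A B (a2^2 - 2*δ*(e*c)^2) :=
          aux_norm δ π hπ σ hσπ a2 (e*c)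
        have hx : x = -(2*δ) * (a2^2 - 2*δ*(e*c)^2) := by
          apply aux_injA π hBfree
          rw [← hN, hfac, map_mul]
          calc π * b' * (σ π * σ b') = (π * σ π) * (b' * σ b') := by ring
          _ = algebraMap A B (-(2*δ)) * algebraMap A B (a2^2 - 2*δ*(e*c)^2) := by
              rw [aux_pi_norm hmax δ hδunit π hπ σ hσπ hBfree, hNb']
          _ = algebraMap A B (-(2*δ) * (a2^2 - 2*δ*(e*c)^2)) := by rw [map_mul]
        have hdvd' : ¬ ((2:A)^k ∣ (a2^2 - 2*δ*(e*c)^2)) := by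
          rintro ⟨t, ht⟩
          apply h2
          refine ⟨-(δ * t), ?_⟩
          rw [hx, ht]; ring
        obtain ⟨n, hn⟩ := ih b' _ hb' hNb' hdvd'
        refine ⟨n + 1, ?_⟩
        rw [hfac, pow_succ']
        exact Associated.mul_left π hn
  intro b hb
  obtain ⟨⟨a1, a2⟩, hb12⟩ := (hBfree b).exists
  have hNb : b * σ b = algebraMap A B (a1^2 - 2*δ*a2^2) := by
    rw [hb12]; exact aux_norm δ π hπ σ hσπ a1 a2
  have hxne : (a1^2 - 2*δ*a2^2 : A) ≠ 0 := by
    intro h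
    have : b * σ b = 0 := by rw [hNb, h, map_zero]
    rcases mul_eq_zero.mp this with h' | h'
    · exact hb h'
    · exact hσ0 b hb h'
  have h2ne : (2:A) ≠ 0 := two_ne_zero
  have hirr2 : Irreducible (2:A) :=
    IsDiscreteValuationRing.irreducible_of_span_eq_maximalIdeal 2 h2ne hmax
  obtain ⟨n, u, hxu⟩ := IsDiscreteValuationRing.eq_unit_mul_pow_irreducible hxne hirr2
  have hnd : ¬ ((2:A)^(n+1) ∣ (a1^2 - 2*δ*a2^2)) := by
    rintro ⟨t, ht⟩
    rw [hxu] at ht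
    have : (u : A) = 2 * t := by
      apply mul_left_cancel₀ (pow_ne_zero n h2ne)
      calc (2:A)^n * u = u * 2^n := by ring
      _ = 2^(n+1) * t := ht
      _ = 2^n * (2*t) := by ring
    have : IsUnit ((2:A) * t) := this ▸ u.isUnit
    exact aux_two_not_unit hmax (isUnit_of_mul_isUnit_left this)
  exact key (n+1) b _ hb hNb hnd

theorem aux_B_dvr : IsDiscreteValuationRing B :=
  IsDiscreteValuationRing.ofHasUnitMulPowIrreducibleFactorization
    ⟨π, aux_irred hmax δ hδunit π hπ σ hσπ hBfree,
      fun hx => aux_factor hmax δ hδunit π hπ σ hσπ hBfree _ hx⟩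

end aux2


/-- For a subset `M ⊆ V`, the "dual" set `M^⊥ = {x ∈ V : H(x,M) ⊆ B}`. -/
def perpSet (B : Type*) {E V : Type*} [CommRing B] [Field E] [Algebra B E]
    [AddCommGroup V] [Module E V] (H : V → V → E) (S : Set V) : Set V :=
  {x | ∀ y ∈ S, ∃ b : B, H x y = algebraMap B E b}

/-- `A_i = {x ∈ L : h(x,L) ⊆ π^i B}`, viewed inside `V`. -/
def AiSetV {B E V : Type*} [CommRing B] [Field E] [Algebra B E]
    [AddCommGroup V] [Module E V] [Module B V]
    (L : Submodule B V) (π : B) (H : V → V → E) (i : ℕ) : Set V :=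
  {x | x ∈ L ∧ ∀ w ∈ L, ∃ b : B, H x w = algebraMap B E (π ^ i * b)}

/-- `B_i = {x ∈ A_i : h(x,x) ∈ 2^{m+1} A}` where `m = ⌈i/2⌉`, viewed inside `V`. -/
def BiSetV (A : Type*) {B E V : Type*} [CommRing A] [CommRing B] [Field E]
    [Algebra B E] [Algebra A E] [AddCommGroup V] [Module E V] [Module B V]
    (L : Submodule B V) (π : B) (H : V → V → E) (i : ℕ) : Set V :=
  {x | x ∈ AiSetV L π H i ∧ ∃ a : A, H x x = algebraMap A E (2 ^ ((i + 1) / 2 + 1) * a)}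

/-- `Y_i = {x ∈ B_i : h(x,B_i) ⊆ π^{i+1} B}`, viewed inside `V`. -/
def YiSetV (A : Type*) {B E V : Type*} [CommRing A] [CommRing B] [Field E]
    [Algebra B E] [Algebra A E] [AddCommGroup V] [Module E V] [Module B V]
    (L : Submodule B V) (π : B) (H : V → V → E) (i : ℕ) : Set V :=
  {x | x ∈ BiSetV A L π H i ∧
    ∀ w ∈ BiSetV A L π H i, ∃ b : B, H x w = algebraMap B E (π ^ (i + 1) * b)}

/-- for odd `i`, an `h`-preserving `E`-linear automorphism `g` of `V`
stabilizing `A_i` and `B_i` induces the identity on `A_i/B_i` iff it induces the identity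
on `B_i^⊥/A_i^⊥`. -/
theorem identity_on_AiBi_iff_identity_on_duals
    {A : Type*} [CommRing A] [IsDomain A] [IsDiscreteValuationRing A] [CharZero A]
    (hmax : IsLocalRing.maximalIdeal A = Ideal.span {2})
    [IsAdicComplete (IsLocalRing.maximalIdeal A) A]
    [CharP (IsLocalRing.ResidueField A) 2]
    [PerfectRing (IsLocalRing.ResidueField A) 2]
    (δ : A) (hδunit : IsUnit δ) (hδ1 : (2 : A) ∣ (δ - 1))
    {B : Type*} [CommRing B] [IsDomain B] [Algebra A B]
    (π : B) (hπ : π ^ 2 = algebraMap A B (2 * δ))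
    (σ : B ≃ₐ[A] B) (hσπ : σ π = -π) (hσinv : ∀ b : B, σ (σ b) = b)
    (hBfree : ∀ b : B, ∃! p : A × A, b = algebraMap A B p.1 + algebraMap A B p.2 * π)
    {E : Type*} [Field E] [Algebra B E] [IsFractionRing B E]
    [Algebra A E] [IsScalarTower A B E]
    (σE : E ≃+* E) (hσE : ∀ b : B, σE (algebraMap B E b) = algebraMap B E (σ b))
    {V : Type*} [AddCommGroup V] [Module E V] [Module B V] [IsScalarTower B E V]
    (H : V → V → E)
    (Hadd : ∀ x y z : V, H (x + y) z = H x z + H y z)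
    (Hsmul : ∀ (a b : E) (v w : V), H (a • v) (b • w) = σE a * b * H v w)
    (Hsymm : ∀ v w : V, H w v = σE (H v w))
    (Hnd : ∀ v : V, (∀ w : V, H v w = 0) → v = 0)
    (L : Submodule B V) [Module.Free B L] [Module.Finite B L]
    (hLspan : Submodule.span E (L : Set V) = ⊤)
    (hLB : ∀ x ∈ L, ∀ y ∈ L, ∃ b : B, H x y = algebraMap B E b)
    (i : ℕ) (hi : Odd i)
    (g : V ≃ₗ[E] V) (hg : ∀ x y : V, H (g x) (g y) = H x y)
    (hgA : g '' AiSetV L π H i = AiSetV L π H i)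
    (hgB : g '' BiSetV A L π H i = BiSetV A L π H i) :
    (∀ x ∈ AiSetV L π H i, g x - x ∈ BiSetV A L π H i) ↔
    (∀ y ∈ perpSet B H (BiSetV A L π H i), g y - y ∈ perpSet B H (AiSetV L π H i)) := by
  classical
  obtain ⟨k, hk⟩ := hi
  -- basic injectivity facts
  have injB : Function.Injective (algebraMap B E) := IsFractionRing.injective B E
  have injA : Function.Injective (algebraMap A B) := aux_injA π hBfree
  have hAE : ∀ a : A, algebraMap A E a = algebraMap B E (algebraMap A B a) := fun a =>
    IsScalarTower.algebraMap_apply A B E a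
  have hsm : ∀ (b : B) (x : V), b • x = algebraMap B E b • x := fun b x =>
    (algebraMap_smul E b x).symm
  have h2B : (2 : B) ≠ 0 := by
    intro h
    have : algebraMap A B 2 = 0 := by rw [map_ofNat]; exact_mod_cast h
    exact two_ne_zero (injA (by simpa using this))
  have hπ0 : π ≠ 0 := aux_pi_ne hmax δ hδunit π hπ σ hσπ hBfree
  -- H basic lemmas
  have HzeroL : ∀ w : V, H 0 w = 0 := by
    intro w
    have h := Hadd 0 0 w
    rw [add_zero] at h
    exact (left_eq_add.mp h)
  have HnegL : ∀ x w : V, H (-x) w = - H x w := by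
    intro x w
    have h := Hadd x (-x) w
    rw [add_neg_cancel, HzeroL] at h
    linear_combination -h
  have HsubL : ∀ x y w : V, H (x - y) w = H x w - H y w := by
    intro x y w
    rw [sub_eq_add_neg, Hadd, HnegL, sub_eq_add_neg]
  have HaddR : ∀ z x y : V, H z (x + y) = H z x + H z y := by
    intro z x y
    rw [Hsymm (x+y) z, Hadd, map_add, ← Hsymm x z, ← Hsymm y z]
  have HnegR : ∀ z x : V, H z (-x) = - H z x := by
    intro z x
    have h := HaddR z x (-x)
    rw [add_neg_cancel] at h
    have h0 : H z (0 : V) = 0 := by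
      rw [Hsymm 0 z, HzeroL, map_zero]
    rw [h0] at h
    linear_combination -h
  have HsubR : ∀ z x y : V, H z (x - y) = H z x - H z y := by
    intro z x y
    rw [sub_eq_add_neg, HaddR, HnegR, sub_eq_add_neg]
  have HsmulL : ∀ (a : E) (x w : V), H (a • x) w = σE a * H x w := by
    intro a x w
    have h := Hsmul a 1 x w
    rw [one_smul, mul_one] at h
    exact h
  have HsmulR : ∀ (b : E) (x w : V), H x (b • w) = b * H x w := by
    intro b x w
    have h := Hsmul 1 b x w
    rw [one_smul, map_one, one_mul] at h
    exact h
  have HsmulBL : ∀ (b : B) (x w : V), H (b • x) w = algebraMap B E (σ b) * H x w := by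
    intro b x w
    rw [hsm, HsmulL, hσE]
  have HsmulBR : ∀ (b : B) (x w : V), H x (b • w) = algebraMap B E b * H x w := by
    intro b x w
    rw [hsm, HsmulR]
  -- σE is an involution
  have σE2 : ∀ x : E, σE (σE x) = x := by
    intro x
    obtain ⟨⟨b, c⟩, hbc⟩ := IsLocalization.surj (nonZeroDivisors B) x
    have hc0 : algebraMap B E (c : B) ≠ 0 := by
      intro h
      exact nonZeroDivisors.ne_zero c.2 (injB (by simpa using h))
    apply mul_right_cancel₀ hc0
    have h1 : σE (σE (x * algebraMap B E (c:B))) = σE (σE (algebraMap B E b)) :=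
      congrArg σE (congrArg σE hbc)
    rw [map_mul, map_mul, hσE, hσE, hσE, hσE, hσinv, hσinv] at h1
    rw [h1, hbc]
  -- coordinates
  have coords : ∀ b : B, ∃ a1 a2 : A, b = algebraMap A B a1 + algebraMap A B a2 * π := by
    intro b
    obtain ⟨⟨a1, a2⟩, hp⟩ := (hBfree b).exists
    exact ⟨a1, a2, hp⟩
  have σmap : ∀ a1 a2 : A, σ (algebraMap A B a1 + algebraMap A B a2 * π)
      = algebraMap A B a1 - algebraMap A B a2 * π := by
    intro a1 a2
    rw [map_add, map_mul, hσπ, σ.commutes, σ.commutes]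
    ring
  -- the exponent
  have hm : (i + 1) / 2 + 1 = k + 2 := by omega
  have hi1 : i + 1 = 2 * (k + 1) := by omega
  -- trace lemma
  have htr : ∀ x y : V, x ∈ AiSetV L π H i → y ∈ L →
      ∃ a : A, H x y + H y x = algebraMap A E (2 ^ (k+2) * a) := by
    intro x y hx hy
    obtain ⟨b, hb⟩ := hx.2 y hy
    obtain ⟨a1, a2, hco⟩ := coords b
    refine ⟨a2 * δ ^ (k+1), ?_⟩
    have hyx : H y x = algebraMap B E (-(π ^ i) * σ b) := by
      rw [Hsymm x y, hb, hσE, map_mul, map_pow, hσπ, Odd.neg_pow ⟨k, by omega⟩]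
    rw [hb, hyx, ← map_add, hAE]
    congr 1
    have e1 : π ^ i * b + -(π ^ i) * σ b = 2 * algebraMap A B a2 * π ^ (i+1) := by
      rw [hco, σmap]; ring
    have e2 : algebraMap A B (2 ^ (k+2) * (a2 * δ ^ (k+1))) = 2 * algebraMap A B a2 * π ^ (i+1) := by
      rw [hi1, pow_mul, hπ, ← map_pow,
        show (2:B) = algebraMap A B 2 from (map_ofNat (algebraMap A B) 2).symm,
        ← map_mul, ← map_mul]
      congr 1
      ring
    rw [e1, e2]
  -- A_i is closed under the module operations
  have hAi_zero : (0 : V) ∈ AiSetV L π H i :=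
    ⟨L.zero_mem, fun w _ => ⟨0, by rw [HzeroL, mul_zero, map_zero]⟩⟩
  have hAi_add : ∀ x y : V, x ∈ AiSetV L π H i → y ∈ AiSetV L π H i →
      x + y ∈ AiSetV L π H i := by
    rintro x y ⟨hxL, hx⟩ ⟨hyL, hy⟩
    refine ⟨L.add_mem hxL hyL, fun w hw => ?_⟩
    obtain ⟨b1, hb1⟩ := hx w hw
    obtain ⟨b2, hb2⟩ := hy w hw
    exact ⟨b1 + b2, by rw [Hadd, hb1, hb2, ← map_add, mul_add]⟩
  have hAi_neg : ∀ x : V, x ∈ AiSetV L π H i → -x ∈ AiSetV L π H i := by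
    rintro x ⟨hxL, hx⟩
    refine ⟨L.neg_mem hxL, fun w hw => ?_⟩
    obtain ⟨b, hb⟩ := hx w hw
    exact ⟨-b, by rw [HnegL, hb, ← map_neg, mul_neg]⟩
  have hAi_smul : ∀ (c : B) (x : V), x ∈ AiSetV L π H i → c • x ∈ AiSetV L π H i := by
    rintro c x ⟨hxL, hx⟩
    refine ⟨L.smul_mem c hxL, fun w hw => ?_⟩
    obtain ⟨b, hb⟩ := hx w hw
    refine ⟨σ c * b, ?_⟩
    rw [HsmulBL, hb, ← map_mul]
    congr 1
    ring
  -- diagonal values of H on L are in A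
  have hdiag : ∀ x : V, x ∈ L → ∃ a : A, H x x = algebraMap A E a := by
    intro x hx
    obtain ⟨b, hb⟩ := hLB x hx x hx
    obtain ⟨a1, a2, hco⟩ := coords b
    have hσb : σ b = b := by
      have h1 : σE (H x x) = H x x := (Hsymm x x).symm
      rw [hb, hσE] at h1
      exact injB h1
    have ha2 : algebraMap A B a2 = 0 := by
      rw [hco, σmap] at hσb
      have h2 : (2 : B) * (algebraMap A B a2 * π) = 0 := by linear_combination -hσb
      rcases mul_eq_zero.mp h2 with h | h
      · exact absurd h h2B
      · rcases mul_eq_zero.mp h with h' | h'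
        · exact h'
        · exact absurd h' hπ0
    refine ⟨a1, ?_⟩
    rw [hb, hco, ha2, hAE]
    congr 1
    ring
  -- scaling norms
  have hnorm_smul : ∀ (c : B) (x : V), (∃ a : A, H x x = algebraMap A E (2 ^ (k+2) * a)) →
      ∃ a : A, H (c • x) (c • x) = algebraMap A E (2 ^ (k+2) * a) := by
    intro c x ⟨a, ha⟩
    obtain ⟨c1, c2, hcc⟩ := coords c
    refine ⟨(c1^2 - 2*δ*c2^2) * a, ?_⟩
    have h1 : H (c • x) (c • x) = algebraMap B E (c * σ c) * H x x := by
      rw [hsm, Hsmul, hσE, ← map_mul]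
      congr 2
      ring
    have h2 : c * σ c = algebraMap A B (c1^2 - 2*δ*c2^2) := by
      rw [hcc]
      exact aux_norm δ π hπ σ hσπ c1 c2
    rw [h1, h2, ha, ← hAE, ← map_mul]
    congr 1
    ring
  -- B_i is a submodule of V
  have hBi_zero : (0 : V) ∈ BiSetV A L π H i :=
    ⟨hAi_zero, 0, by rw [HzeroL, mul_zero, map_zero]⟩
  have hBi_add : ∀ x y : V, x ∈ BiSetV A L π H i → y ∈ BiSetV A L π H i →
      x + y ∈ BiSetV A L π H i := by
    rintro x y ⟨hxA, ax, hax⟩ ⟨hyA, ay, hay⟩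
    refine ⟨hAi_add x y hxA hyA, ?_⟩
    obtain ⟨atr, hatr⟩ := htr x y hxA hyA.1
    refine ⟨ax + ay + atr, ?_⟩
    have h1 : H (x + y) (x + y) = H x x + H y y + (H x y + H y x) := by
      rw [Hadd, HaddR, HaddR]
      ring
    rw [h1, hax, hay, hatr, hm, ← map_add, ← map_add]
    congr 1
    ring
  have hBi_smul : ∀ (c : B) (x : V), x ∈ BiSetV A L π H i → c • x ∈ BiSetV A L π H i := by
    rintro c x ⟨hxA, ax, hax⟩
    refine ⟨hAi_smul c x hxA, ?_⟩
    rw [hm] at hax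
    obtain ⟨a, ha⟩ := hnorm_smul c x ⟨ax, hax⟩
    exact ⟨a, by rw [hm]; exact ha⟩
  have hBi_neg : ∀ x : V, x ∈ BiSetV A L π H i → -x ∈ BiSetV A L π H i := by
    intro x hx
    have h := hBi_smul (-1) x hx
    rwa [neg_smul, one_smul] at h
  set BiM : Submodule B V :=
    { carrier := BiSetV A L π H i
      add_mem' := fun {x y} hx hy => hBi_add x y hx hy
      zero_mem' := hBi_zero
      smul_mem' := fun c {x} hx => hBi_smul c x hx } with hBiM
  have hBiMem : ∀ x : V, x ∈ BiM ↔ x ∈ BiSetV A L π H i := fun x => Iff.rfl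
  -- π^{i+1} • L ⊆ B_i
  have hpowL : ∀ x : V, x ∈ L → (π ^ (i+1)) • x ∈ BiSetV A L π H i := by
    intro x hx
    have hσpow : σ (π ^ (i+1)) = π ^ (i+1) := by
      rw [map_pow, hσπ, Even.neg_pow ⟨k+1, by omega⟩]
    constructor
    · refine ⟨L.smul_mem _ hx, fun w hw => ?_⟩
      obtain ⟨b, hb⟩ := hLB x hx w hw
      refine ⟨π * b, ?_⟩
      rw [HsmulBL, hσpow, hb, ← map_mul]
      congr 1
      ring
    · obtain ⟨a, ha⟩ := hdiag x hx
      refine ⟨2 ^ k * δ ^ (i+1) * a, ?_⟩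
      have h1 : H ((π ^ (i+1)) • x) ((π ^ (i+1)) • x)
          = algebraMap B E (π ^ (i+1) * π ^ (i+1)) * H x x := by
        rw [hsm, Hsmul, hσE, hσpow, ← map_mul]
      have h2 : π ^ (i+1) * π ^ (i+1) = algebraMap A B ((2*δ) ^ (i+1)) := by
        rw [← pow_add, show i + 1 + (i+1) = 2 * (i+1) by ring, pow_mul, hπ, map_pow]
      rw [h1, h2, ha, ← hAE, ← map_mul, hm]
      congr 1
      rw [hk]
      ring
  -- B is a DVR, so B_i is finite free
  haveI hdvrB : IsDiscreteValuationRing B := aux_B_dvr hmax δ hδunit π hπ σ hσπ hBfree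
  haveI : IsNoetherian B ↥L := isNoetherian_of_isNoetherianRing_of_finite B ↥L
  have hBiL : BiM ≤ L := fun x hx => hx.1.1
  have hBiFG : BiM.FG := by
    have h1 : (Submodule.comap L.subtype BiM).FG :=
      IsNoetherian.noetherian (Submodule.comap L.subtype BiM)
    have h2 : Submodule.map L.subtype (Submodule.comap L.subtype BiM) = BiM := by
      rw [Submodule.map_comap_subtype]
      exact inf_eq_right.mpr hBiL
    exact h2 ▸ h1.map L.subtype
  haveI : Module.Finite B ↥BiM := Module.Finite.iff_fg.mpr hBiFG
  haveI : NoZeroSMulDivisors B ↥BiM := by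
    refine ⟨fun {c x} h => ?_⟩
    rcases eq_or_ne c 0 with hc | hc
    · exact Or.inl hc
    · refine Or.inr ?_
      have h1 : c • (x : V) = 0 := by
        have := congrArg (Subtype.val) h
        simpa using this
      rw [hsm] at h1
      rcases smul_eq_zero.mp h1 with h' | h'
      · exact absurd (injB (by simpa using h')) hc
      · exact Subtype.ext h'
  obtain ⟨n, bas⟩ := Module.basisOfFiniteTypeTorsionFree' (R := B) (M := ↥BiM)
  set v : Fin n → V := fun j => ((bas j : ↥BiM) : V) with hv
  have hv_mem : ∀ j, v j ∈ BiSetV A L π H i := fun j => (bas j).2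
  -- v is linearly independent over E
  have hliB : LinearIndependent B v := by
    have h1 := bas.linearIndependent
    have h2 := h1.map' BiM.subtype (Submodule.ker_subtype BiM)
    exact h2
  have hliE : LinearIndependent E v := (LinearIndependent.iff_fractionRing B E).mp hliB
  -- v spans V over E
  have hπpow0 : algebraMap B E (π ^ (i+1)) ≠ 0 := fun h =>
    pow_ne_zero (i+1) hπ0 (injB (by simpa using h))
  have hspanv : ⊤ ≤ Submodule.span E (Set.range v) := by
    have hsub : (L : Set V) ⊆ (Submodule.span E (Set.range v) : Set V) := by
      intro x hx
      have h1 : (π ^ (i+1)) • x ∈ BiM := hpowL x hx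
      have h2 : (π ^ (i+1)) • x ∈ Submodule.span E (Set.range v) := by
        have h3 : ((π ^ (i+1)) • x : V) ∈ Submodule.map BiM.subtype
            (Submodule.span B (Set.range bas)) := by
          rw [bas.span_eq]
          exact ⟨⟨_, h1⟩, Submodule.mem_top, rfl⟩
        rw [Submodule.map_span] at h3
        have h4 : BiM.subtype '' Set.range bas = Set.range v := by
          ext w
          simp [hv, Set.range_comp]
        rw [h4] at h3
        -- from B-span to E-span
        have h5 : Submodule.span B (Set.range v) ≤
            (Submodule.span E (Set.range v)).restrictScalars B := by
          rw [Submodule.span_le]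
          exact Submodule.subset_span
        exact h5 h3
      have h6 : x = (algebraMap B E (π ^ (i+1)))⁻¹ • ((π ^ (i+1)) • x) := by
        rw [hsm, smul_smul, inv_mul_cancel₀ hπpow0, one_smul]
      rw [h6]
      exact Submodule.smul_mem _ _ h2
    rw [← hLspan]
    rw [Submodule.span_le]
    exact hsub
  set bE : Module.Basis (Fin n) E V := Module.Basis.mk hliE hspanv with hbE
  have hbEv : ∀ j, bE j = v j := fun j => Module.Basis.mk_apply hliE hspanv j
  -- finite sums in each slot
  have HsumL : ∀ (z : V) (s : Finset (Fin n)) (u : Fin n → V),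
      H (∑ l ∈ s, u l) z = ∑ l ∈ s, H (u l) z := by
    intro z s u
    induction s using Finset.induction_on with
    | empty => simpa using HzeroL z
    | insert _ _ hnotmem ih =>
      rw [Finset.sum_insert hnotmem, Finset.sum_insert hnotmem, Hadd, ih]
  have HsumR : ∀ (z : V) (s : Finset (Fin n)) (u : Fin n → V),
      H z (∑ l ∈ s, u l) = ∑ l ∈ s, H z (u l) := by
    intro z s u
    induction s using Finset.induction_on with
    | empty =>
      have h0 : H z (0 : V) = 0 := by rw [Hsymm 0 z, HzeroL, map_zero]
      simpa using h0
    | insert _ _ hnotmem ih =>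
      rw [Finset.sum_insert hnotmem, Finset.sum_insert hnotmem, HaddR, ih]
  -- Gram matrix
  set G : Matrix (Fin n) (Fin n) E := Matrix.of (fun j l => H (v j) (v l)) with hG
  have hGdet : G.det ≠ 0 := by
    intro hdet
    obtain ⟨c, hc0, hcG⟩ := Matrix.exists_vecMul_eq_zero_iff.mpr hdet
    set z : V := ∑ j, σE.symm (c j) • v j with hz
    have hzv : ∀ l, H z (v l) = 0 := by
      intro l
      rw [hz, HsumL]
      have h1 : ∀ j, H (σE.symm (c j) • v j) (v l) = c j * G j l := by
        intro j
        rw [HsmulL, RingEquiv.apply_symm_apply]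
        rfl
      rw [Finset.sum_congr rfl (fun j _ => h1 j)]
      exact congrFun hcG l
    have hzw : ∀ w : V, H z w = 0 := by
      intro w
      have h1 : w = ∑ l, bE.repr w l • bE l := (bE.sum_repr w).symm
      rw [h1, HsumR]
      refine Finset.sum_eq_zero fun l _ => ?_
      rw [HsmulR, hbEv, hzv l, mul_zero]
    have hz0 : z = 0 := Hnd z hzw
    have hcoef : ∀ j, σE.symm (c j) = 0 := by
      have := Fintype.linearIndependent_iff.mp hliE (fun j => σE.symm (c j)) (by rw [← hz]; exact hz0)
      exact this
    apply hc0
    funext j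
    have := hcoef j
    have h2 := congrArg σE this
    rwa [RingEquiv.apply_symm_apply, map_zero] at h2
  have hGunit : IsUnit G.det := isUnit_iff_ne_zero.mpr hGdet
  set f : Fin n → V := fun j => ∑ l, σE.symm (G⁻¹ j l) • v l with hf
  have hfv : ∀ j l, H (f j) (v l) = if j = l then 1 else 0 := by
    intro j l
    rw [hf]
    simp only []
    rw [HsumL]
    have h1 : ∀ t, H (σE.symm (G⁻¹ j t) • v t) (v l) = G⁻¹ j t * G t l := by
      intro t
      rw [HsmulL, RingEquiv.apply_symm_apply]
      rfl
    rw [Finset.sum_congr rfl (fun t _ => h1 t)]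
    have h2 : ∑ t, G⁻¹ j t * G t l = (G⁻¹ * G) j l := rfl
    rw [h2, Matrix.nonsing_inv_mul G hGunit, Matrix.one_apply]
  have hvf : ∀ t j, H (v t) (f j) = if j = t then 1 else 0 := by
    intro t j
    rw [Hsymm (f j) (v t), hfv]
    by_cases h : j = t <;> simp [h]
  -- each f j is in the perp of B_i
  have hfperp : ∀ j, f j ∈ perpSet B H (BiSetV A L π H i) := by
    intro j w hw
    have hwM : w ∈ BiM := hw
    set u : ↥BiM := ⟨w, hwM⟩ with hu
    have h1 : w = ∑ l, bas.repr u l • v l := by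
      have h2 := bas.sum_repr u
      have h3 := congrArg (Subtype.val) h2
      rw [AddSubmonoidClass.coe_finset_sum] at h3
      simp only [SetLike.val_smul] at h3
      exact h3.symm
    refine ⟨bas.repr u j, ?_⟩
    rw [h1, HsumR]
    have h4 : ∀ l, H (f j) (bas.repr u l • v l) =
        algebraMap B E (bas.repr u l) * (if j = l then 1 else 0) := by
      intro l
      rw [HsmulBR, hfv]
    rw [Finset.sum_congr rfl (fun l _ => h4 l)]
    simp
  -- the coordinate lemma: pairing integrally with all f j puts z in B_i
  have hcoord : ∀ z : V, (∀ j, ∃ b : B, H z (f j) = algebraMap B E b) →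
      z ∈ BiSetV A L π H i := by
    intro z hz
    have hrep : z = ∑ t, bE.repr z t • v t := by
      have h1 := bE.sum_repr z
      conv_lhs => rw [← h1]
      exact Finset.sum_congr rfl fun t _ => by rw [hbEv]
    have hcj : ∀ j, σE (bE.repr z j) = H z (f j) := by
      intro j
      conv_rhs => rw [hrep, HsumL]
      have h2 : ∀ t, H (bE.repr z t • v t) (f j) = σE (bE.repr z t) * (if j = t then 1 else 0) := by
        intro t
        rw [HsmulL, hvf]
      rw [Finset.sum_congr rfl (fun t _ => h2 t)]
      simp
    have hdj : ∀ j, ∃ b : B, bE.repr z j = algebraMap B E b := by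
      intro j
      obtain ⟨b, hb⟩ := hz j
      refine ⟨σ b, ?_⟩
      have h3 : σE (σE (bE.repr z j)) = σE (algebraMap B E b) := by rw [hcj j, hb]
      rw [σE2, hσE] at h3
      exact h3
    choose d hd using hdj
    have hzM : z ∈ BiM := by
      have h5 : z = ∑ t, d t • v t := by
        rw [hrep]
        exact Finset.sum_congr rfl fun t _ => by rw [hd t, hsm]
      rw [h5]
      exact Submodule.sum_mem BiM fun t _ => Submodule.smul_mem BiM (d t) ((hv_mem t))
    exact hzM
  -- main equivalence
  constructor
  · -- forward direction
    intro hL y hy x hx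
    obtain ⟨x', hx', hgx⟩ : x ∈ ⇑g '' AiSetV L π H i := by
      have hx2 := hx
      rw [← hgA] at hx2
      exact hx2
    have hsymmx : g.symm x = x' := by rw [← hgx, LinearEquiv.symm_apply_apply]
    have hmem : g.symm x - x ∈ BiSetV A L π H i := by
      have h2 : g x' - x' ∈ BiM := hL x' hx'
      have h3 : -(g x' - x') ∈ BiM := BiM.neg_mem h2
      have h4 : g.symm x - x = -(g x' - x') := by
        rw [hsymmx, ← hgx, neg_sub]
      rw [h4]
      exact h3
    obtain ⟨b, hb⟩ := hy _ hmem
    refine ⟨b, ?_⟩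
    calc H (g y - y) x = H (g y) x - H y x := HsubL _ _ _
      _ = H y (g.symm x) - H y x := by
          have h5 : H (g y) (g (g.symm x)) = H y (g.symm x) := hg y (g.symm x)
          rw [g.apply_symm_apply] at h5
          rw [h5]
      _ = H y (g.symm x - x) := (HsubR _ _ _).symm
      _ = algebraMap B E b := hb
  · -- backward direction
    intro hR x hx
    apply hcoord
    intro j
    have key : ∀ y ∈ perpSet B H (BiSetV A L π H i),
        ∃ b : B, H (g x - x) y = algebraMap B E b := by
      intro y hy
      have hsy : g.symm y ∈ perpSet B H (BiSetV A L π H i) := by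
        intro w hw
        have hgw : g w ∈ BiSetV A L π H i := by
          rw [← hgB]; exact ⟨w, hw, rfl⟩
        obtain ⟨b, hb⟩ := hy (g w) hgw
        refine ⟨b, ?_⟩
        have h2 : H (g (g.symm y)) (g w) = H (g.symm y) w := hg (g.symm y) w
        rw [g.apply_symm_apply] at h2
        rw [← h2]
        exact hb
      have hperp := hR (g.symm y) hsy
      rw [g.apply_symm_apply] at hperp
      obtain ⟨b, hb⟩ := hperp x hx
      have h1 : H y (g x) = H (g.symm y) x := by
        have h2 := hg (g.symm y) x
        rw [g.apply_symm_apply] at h2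
        exact h2
      have h3 : H y (g x - x) = - H (y - g.symm y) x := by
        rw [HsubR, HsubL, h1]
        ring
      refine ⟨σ (-b), ?_⟩
      rw [Hsymm y (g x - x), h3, hb, ← map_neg, hσE]
    exact key (f j) (hfperp j)
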